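/- arXiv:1610.02542 — 7 statements merged into one kernel-verified Lean document; each statement's English description precedes it below -/
import Mathlib

section
/- Let x > y > z > 0 be positive integers. Set u1 = x/gcd(x,y), u2 = y/gcd(x,y), v1 = y/gcd(y,z), v2 = z/gcd(y,z), w1 = x/gcd(x,z), w2 = z/gcd(x,z). Then (1/√2)·(|u1−u2|/√(u1²+u2²) + |v1−v2|/√(v1²+v2²) + |w1−w2|/√(w1²+w2²)) · (u1·v1·w1)^(1/3) ≥ 3/2. -/
lemma key_term (a b : ℕ) (hb : 1 ≤ b) (hab : b < a) :
    1 / (Real.sqrt 2 * a) ≤ |(a : ℝ) - b| / Real.sqrt ((a : ℝ) ^ 2 + (b : ℝ) ^ 2) := by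
  have ha : (1 : ℝ) ≤ a := by exact_mod_cast hb.trans hab.le
  have hb' : (1 : ℝ) ≤ b := by exact_mod_cast hb
  have hba : (b : ℝ) < a := by exact_mod_cast hab
  have h1 : (1 : ℝ) ≤ (a : ℝ) - b := by
    have : (b : ℝ) + 1 ≤ a := by exact_mod_cast hab
    linarith
  have habs : |(a : ℝ) - b| = (a : ℝ) - b := abs_of_pos (by linarith)
  have hden_pos : 0 < Real.sqrt ((a : ℝ) ^ 2 + (b : ℝ) ^ 2) :=
    Real.sqrt_pos.mpr (by nlinarith)
  have hden_le : Real.sqrt ((a : ℝ) ^ 2 + (b : ℝ) ^ 2) ≤ Real.sqrt 2 * a := by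
    have h2 : ((a : ℝ) ^ 2 + (b : ℝ) ^ 2) ≤ 2 * (a : ℝ) ^ 2 := by nlinarith
    have := Real.sqrt_le_sqrt h2
    calc Real.sqrt ((a : ℝ) ^ 2 + (b : ℝ) ^ 2) ≤ Real.sqrt (2 * (a : ℝ) ^ 2) := this
      _ = Real.sqrt 2 * a := by
          rw [Real.sqrt_mul (by norm_num), Real.sqrt_sq (by linarith)]
  rw [habs]
  exact div_le_div₀ (by linarith) h1 hden_pos hden_le

/-- For integers x > y > z > 0, the projective distance from [x:y:z] to [1:1:1]
times the cube root of the anticanonical height u1*v1*w1 is at least 3/2. -/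
theorem stmt_0 (x y z u1 u2 v1 v2 w1 w2 : ℕ)
    (hz : 0 < z) (hzy : z < y) (hyx : y < x)
    (hu1 : u1 = x / Nat.gcd x y) (hu2 : u2 = y / Nat.gcd x y)
    (hv1 : v1 = y / Nat.gcd y z) (hv2 : v2 = z / Nat.gcd y z)
    (hw1 : w1 = x / Nat.gcd x z) (hw2 : w2 = z / Nat.gcd x z) :
    (1 / Real.sqrt 2) *
      (|(u1 : ℝ) - u2| / Real.sqrt ((u1 : ℝ) ^ 2 + (u2 : ℝ) ^ 2)
        + |(v1 : ℝ) - v2| / Real.sqrt ((v1 : ℝ) ^ 2 + (v2 : ℝ) ^ 2)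
        + |(w1 : ℝ) - w2| / Real.sqrt ((w1 : ℝ) ^ 2 + (w2 : ℝ) ^ 2)) *
      ((u1 * v1 * w1 : ℕ) : ℝ) ^ ((1 : ℝ) / 3) ≥ 3 / 2 := by
  have hy : 0 < y := hz.trans hzy
  have hx : 0 < x := hy.trans hyx
  -- nat facts
  have hu2p : 1 ≤ u2 := by
    rw [hu2]
    exact (Nat.one_le_div_iff (Nat.gcd_pos_of_pos_left y hx)).mpr
      (Nat.le_of_dvd hy (Nat.gcd_dvd_right x y))
  have hu12 : u2 < u1 := by
    rw [hu1, hu2]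
    exact Nat.div_lt_div_of_lt_of_dvd (Nat.gcd_dvd_left x y) hyx
  have hv2p : 1 ≤ v2 := by
    rw [hv2]
    exact (Nat.one_le_div_iff (Nat.gcd_pos_of_pos_left z hy)).mpr
      (Nat.le_of_dvd hz (Nat.gcd_dvd_right y z))
  have hv12 : v2 < v1 := by
    rw [hv1, hv2]
    exact Nat.div_lt_div_of_lt_of_dvd (Nat.gcd_dvd_left y z) hzy
  have hw2p : 1 ≤ w2 := by
    rw [hw2]
    exact (Nat.one_le_div_iff (Nat.gcd_pos_of_pos_left z hx)).mpr
      (Nat.le_of_dvd hz (Nat.gcd_dvd_right x z))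
  have hw12 : w2 < w1 := by
    rw [hw1, hw2]
    exact Nat.div_lt_div_of_lt_of_dvd (Nat.gcd_dvd_left x z) (hzy.trans hyx)
  -- real positivity
  have hU : (1 : ℝ) ≤ u1 := by exact_mod_cast hu2p.trans hu12.le
  have hV : (1 : ℝ) ≤ v1 := by exact_mod_cast hv2p.trans hv12.le
  have hW : (1 : ℝ) ≤ w1 := by exact_mod_cast hw2p.trans hw12.le
  have hUp : (0 : ℝ) < u1 := by linarith
  have hVp : (0 : ℝ) < v1 := by linarith
  have hWp : (0 : ℝ) < w1 := by linarith
  have hs2 : (0 : ℝ) < Real.sqrt 2 := Real.sqrt_pos.mpr (by norm_num)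
  have hs2sq : Real.sqrt 2 * Real.sqrt 2 = 2 := Real.mul_self_sqrt (by norm_num)
  have h1 := key_term u1 u2 hu2p hu12
  have h2 := key_term v1 v2 hv2p hv12
  have h3 := key_term w1 w2 hw2p hw12
  set T : ℝ := ((u1 * v1 * w1 : ℕ) : ℝ) ^ ((1 : ℝ) / 3) with hT
  have hPpos : (0 : ℝ) < ((u1 * v1 * w1 : ℕ) : ℝ) := by
    push_cast; positivity
  have hTpos : 0 < T := Real.rpow_pos_of_pos hPpos _
  -- AM-GM step
  have hgm : (1 / (u1 : ℝ)) ^ ((1:ℝ)/3) * (1 / (v1 : ℝ)) ^ ((1:ℝ)/3) *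
      (1 / (w1 : ℝ)) ^ ((1:ℝ)/3) ≤
      (1/3) * (1 / (u1 : ℝ)) + (1/3) * (1 / (v1 : ℝ)) + (1/3) * (1 / (w1 : ℝ)) :=
    Real.geom_mean_le_arith_mean3_weighted (by norm_num) (by norm_num) (by norm_num)
      (by positivity) (by positivity) (by positivity) (by norm_num)
  have hprod : (1 / (u1 : ℝ)) ^ ((1:ℝ)/3) * (1 / (v1 : ℝ)) ^ ((1:ℝ)/3) *
      (1 / (w1 : ℝ)) ^ ((1:ℝ)/3) * T = 1 := by
    rw [hT]
    rw [← Real.mul_rpow (by positivity) (by positivity),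
        ← Real.mul_rpow (by positivity) (by positivity),
        ← Real.mul_rpow (by positivity) (by exact hPpos.le)]
    have : (1 / (u1 : ℝ)) * (1 / (v1 : ℝ)) * (1 / (w1 : ℝ)) * ((u1 * v1 * w1 : ℕ) : ℝ) = 1 := by
      push_cast
      field_simp
    rw [this, Real.one_rpow]
  have hsum : (1/3) * (1 / (u1 : ℝ)) + (1/3) * (1 / (v1 : ℝ)) + (1/3) * (1 / (w1 : ℝ)) ≥ 0 := by
    positivity
  have hstep : ((1/3) * (1 / (u1 : ℝ)) + (1/3) * (1 / (v1 : ℝ)) + (1/3) * (1 / (w1 : ℝ))) * T ≥ 1 := by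
    calc ((1/3) * (1 / (u1 : ℝ)) + (1/3) * (1 / (v1 : ℝ)) + (1/3) * (1 / (w1 : ℝ))) * T
        ≥ ((1 / (u1 : ℝ)) ^ ((1:ℝ)/3) * (1 / (v1 : ℝ)) ^ ((1:ℝ)/3) *
          (1 / (w1 : ℝ)) ^ ((1:ℝ)/3)) * T := by
          apply mul_le_mul_of_nonneg_right hgm hTpos.le
      _ = 1 := hprod
  -- lower bound on sum
  have hS : |(u1 : ℝ) - u2| / Real.sqrt ((u1 : ℝ) ^ 2 + (u2 : ℝ) ^ 2)
        + |(v1 : ℝ) - v2| / Real.sqrt ((v1 : ℝ) ^ 2 + (v2 : ℝ) ^ 2)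
        + |(w1 : ℝ) - w2| / Real.sqrt ((w1 : ℝ) ^ 2 + (w2 : ℝ) ^ 2)
      ≥ 1 / (Real.sqrt 2 * u1) + 1 / (Real.sqrt 2 * v1) + 1 / (Real.sqrt 2 * w1) := by
    linarith
  have hrw : (1 / Real.sqrt 2) * (1 / (Real.sqrt 2 * u1) + 1 / (Real.sqrt 2 * v1)
      + 1 / (Real.sqrt 2 * w1)) =
      (3/2) * ((1/3) * (1 / (u1 : ℝ)) + (1/3) * (1 / (v1 : ℝ)) + (1/3) * (1 / (w1 : ℝ))) := by
    have hhalf : ∀ a : ℝ, (1 / Real.sqrt 2) * (1 / (Real.sqrt 2 * a)) = (1/2) * (1/a) := by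
      intro a
      rw [div_mul_div_comm, div_mul_div_comm, ← mul_assoc, hs2sq]
    rw [mul_add, mul_add, hhalf, hhalf, hhalf]
    ring
  calc (1 / Real.sqrt 2) *
      (|(u1 : ℝ) - u2| / Real.sqrt ((u1 : ℝ) ^ 2 + (u2 : ℝ) ^ 2)
        + |(v1 : ℝ) - v2| / Real.sqrt ((v1 : ℝ) ^ 2 + (v2 : ℝ) ^ 2)
        + |(w1 : ℝ) - w2| / Real.sqrt ((w1 : ℝ) ^ 2 + (w2 : ℝ) ^ 2)) * T
      ≥ (1 / Real.sqrt 2) * (1 / (Real.sqrt 2 * u1) + 1 / (Real.sqrt 2 * v1)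
          + 1 / (Real.sqrt 2 * w1)) * T := by
        apply mul_le_mul_of_nonneg_right _ hTpos.le
        apply mul_le_mul_of_nonneg_left hS (by positivity)
    _ = (3/2) * (((1/3) * (1 / (u1 : ℝ)) + (1/3) * (1 / (v1 : ℝ)) + (1/3) * (1 / (w1 : ℝ))) * T) := by
        rw [hrw]; ring
    _ ≥ (3/2) * 1 := by
        apply mul_le_mul_of_nonneg_left hstep (by norm_num)
    _ = 3/2 := by norm_num
end

section
/- Let x, y, z be positive integers with x > y > z and gcd(x,y,z) = 1. Set d1 = gcd(y,z), d2 = gcd(x,z), d3 = gcd(x,y), d4 = gcd(x−z, y−z). Let X' = yz/(d1 d2 d3), Y' = xz/(d1 d2 d3), Z' = xy/(d1 d2 d3) be the reduced Cremona-image coordinates. Then gcd(Z'−X', Z'−Y') = d4, i.e. the parameter u is preserved by the Cremona transformation: gcd(y(x−z)/(d1 d2 d3), x(y−z)/(d1 d2 d3)) = gcd(x−z, y−z). -/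
lemma fsub_ge {p m n : ℕ} (hp : p.Prime) (hn : 0 < n) (hnm : n < m) :
    min (m.factorization p) (n.factorization p) ≤ (m - n).factorization p := by
  rw [← Nat.Prime.pow_dvd_iff_le_factorization hp (by omega)]
  exact Nat.dvd_sub
    (dvd_trans (pow_dvd_pow p (min_le_left _ _)) (Nat.ordProj_dvd m p))
    (dvd_trans (pow_dvd_pow p (min_le_right _ _)) (Nat.ordProj_dvd n p))

lemma fsub_eq {p m n : ℕ} (hp : p.Prime) (hn : 0 < n) (hnm : n < m)
    (hne : m.factorization p ≠ n.factorization p) :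
    (m - n).factorization p = min (m.factorization p) (n.factorization p) := by
  refine le_antisymm ?_ (fsub_ge hp hn hnm)
  by_contra hcon
  push_neg at hcon
  rcases lt_or_gt_of_ne hne with hlt | hlt
  · have hd1 : p ^ (m.factorization p + 1) ∣ m - n :=
      (Nat.Prime.pow_dvd_iff_le_factorization hp (by omega)).2 (by omega)
    have hd2 : p ^ (m.factorization p + 1) ∣ n :=
      (Nat.Prime.pow_dvd_iff_le_factorization hp (by omega)).2 (by omega)
    have hd3 : p ^ (m.factorization p + 1) ∣ m := by
      have := Nat.dvd_add hd1 hd2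
      rwa [Nat.sub_add_cancel (le_of_lt hnm)] at this
    have := (Nat.Prime.pow_dvd_iff_le_factorization hp (by omega)).1 hd3
    omega
  · have hd1 : p ^ (n.factorization p + 1) ∣ m - n :=
      (Nat.Prime.pow_dvd_iff_le_factorization hp (by omega)).2 (by omega)
    have hd2 : p ^ (n.factorization p + 1) ∣ m :=
      (Nat.Prime.pow_dvd_iff_le_factorization hp (by omega)).2 (by omega)
    have hd3 : p ^ (n.factorization p + 1) ∣ n := by
      have := Nat.dvd_sub hd2 hd1
      rwa [Nat.sub_sub_self (le_of_lt hnm)] at this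
    have := (Nat.Prime.pow_dvd_iff_le_factorization hp (by omega)).1 hd3
    omega

lemma key (x y z : ℕ) (hz : 0 < z) (hzy : z < y) (hyx : y < x)
    (hcop : Nat.gcd (Nat.gcd x y) z = 1) :
    Nat.gcd (y * (x - z)) (x * (y - z)) =
      Nat.gcd y z * Nat.gcd x z * Nat.gcd x y * Nat.gcd (x - z) (y - z) := by
  have hx0 : x ≠ 0 := by omega
  have hy0 : y ≠ 0 := by omega
  have hz0 : z ≠ 0 := by omega
  have ha0 : x - z ≠ 0 := by omega
  have hb0 : y - z ≠ 0 := by omega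
  have hA0 : y * (x - z) ≠ 0 := Nat.mul_ne_zero hy0 ha0
  have hB0 : x * (y - z) ≠ 0 := Nat.mul_ne_zero hx0 hb0
  have hgxy : Nat.gcd x y ≠ 0 := fun h => hx0 (Nat.eq_zero_of_gcd_eq_zero_left h)
  have hgyz : Nat.gcd y z ≠ 0 := fun h => hy0 (Nat.eq_zero_of_gcd_eq_zero_left h)
  have hgxz : Nat.gcd x z ≠ 0 := fun h => hx0 (Nat.eq_zero_of_gcd_eq_zero_left h)
  have hgab : Nat.gcd (x - z) (y - z) ≠ 0 := fun h => ha0 (Nat.eq_zero_of_gcd_eq_zero_left h)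
  have hgA : Nat.gcd (y * (x - z)) (x * (y - z)) ≠ 0 := fun h => hA0 (Nat.eq_zero_of_gcd_eq_zero_left h)
  apply Nat.eq_of_factorization_eq hgA
    (by positivity)
  intro p
  by_cases hp : p.Prime
  · have h0 : (Nat.gcd (Nat.gcd x y) z).factorization p = 0 := by
      rw [hcop]; simp
    rw [Nat.factorization_gcd hgxy hz0, Finsupp.inf_apply,
      Nat.factorization_gcd hx0 hy0, Finsupp.inf_apply] at h0
    have hzx : z < x := lt_trans hzy hyx
    have hva1 := fsub_ge (m := x) (n := z) hp hz hzx
    have hva2 : x.factorization p ≠ z.factorization p →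
        (x - z).factorization p = min (x.factorization p) (z.factorization p) :=
      fsub_eq hp hz hzx
    have hvb1 := fsub_ge (m := y) (n := z) hp hz hzy
    have hvb2 : y.factorization p ≠ z.factorization p →
        (y - z).factorization p = min (y.factorization p) (z.factorization p) :=
      fsub_eq hp hz hzy
    rw [Nat.factorization_gcd hA0 hB0, Finsupp.inf_apply,
      Nat.factorization_mul hy0 ha0, Nat.factorization_mul hx0 hb0,
      Nat.factorization_mul (Nat.mul_ne_zero (Nat.mul_ne_zero hgyz hgxz) hgxy) hgab,
      Nat.factorization_mul (Nat.mul_ne_zero hgyz hgxz) hgxy,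
      Nat.factorization_mul hgyz hgxz,
      Nat.factorization_gcd hy0 hz0, Nat.factorization_gcd hx0 hz0,
      Nat.factorization_gcd hx0 hy0, Nat.factorization_gcd ha0 hb0]
    simp only [Finsupp.add_apply, Finsupp.inf_apply]
    by_cases hαγ : x.factorization p = z.factorization p
    · by_cases hβγ : y.factorization p = z.factorization p
      · omega
      · have := hvb2 hβγ; omega
    · have h1 := hva2 hαγ
      by_cases hβγ : y.factorization p = z.factorization p
      · omega
      · have := hvb2 hβγ; omega
  · simp [Nat.factorization_eq_zero_of_not_prime _ hp]


lemma div_sub_div' (g A B : ℕ) (hg : 0 < g) (hA : g ∣ A) (hB : g ∣ B) :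
    A / g - B / g = (A - B) / g := by
  obtain ⟨a, rfl⟩ := hA
  obtain ⟨b, rfl⟩ := hB
  rw [Nat.mul_div_cancel_left _ hg, Nat.mul_div_cancel_left _ hg, ← Nat.mul_sub,
    Nat.mul_div_cancel_left _ hg]

/-- The parameter u = gcd(x−z, y−z) is preserved by the Cremona transformation. -/
theorem stmt_4 (x y z : ℕ) (hz : 0 < z) (hzy : z < y) (hyx : y < x)
    (hcop : Nat.gcd (Nat.gcd x y) z = 1)
    (d1 d2 d3 d4 X' Y' Z' : ℕ)
    (hd1 : d1 = Nat.gcd y z) (hd2 : d2 = Nat.gcd x z) (hd3 : d3 = Nat.gcd x y)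
    (hd4 : d4 = Nat.gcd (x - z) (y - z))
    (hX : X' = y * z / (d1 * d2 * d3)) (hY : Y' = x * z / (d1 * d2 * d3))
    (hZ : Z' = x * y / (d1 * d2 * d3)) :
    Nat.gcd (Z' - X') (Z' - Y') = d4 ∧
    Nat.gcd (y * (x - z) / (d1 * d2 * d3)) (x * (y - z) / (d1 * d2 * d3))
      = Nat.gcd (x - z) (y - z) := by
  subst hd1 hd2 hd3 hd4 hX hY hZ
  set d1 := Nat.gcd y z with hd1
  set d2 := Nat.gcd x z with hd2
  set d3 := Nat.gcd x y with hd3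
  set g := d1 * d2 * d3 with hgdef
  have hx0 : x ≠ 0 := by omega
  have hy0 : y ≠ 0 := by omega
  have hkey := key x y z hz hzy hyx hcop
  have hg0 : 0 < g := by
    have h1 : d1 ≠ 0 := fun h => hy0 (Nat.eq_zero_of_gcd_eq_zero_left h)
    have h2 : d2 ≠ 0 := fun h => hx0 (Nat.eq_zero_of_gcd_eq_zero_left h)
    have h3 : d3 ≠ 0 := fun h => hx0 (Nat.eq_zero_of_gcd_eq_zero_left h)
    positivity
  -- coprimality of d1 and d2
  have hc12 : Nat.Coprime d1 d2 := by
    have h := Nat.dvd_gcd (Nat.dvd_gcd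
        ((Nat.gcd_dvd_right d1 d2).trans (Nat.gcd_dvd_left x z) : Nat.gcd d1 d2 ∣ x)
        ((Nat.gcd_dvd_left d1 d2).trans (Nat.gcd_dvd_left y z) : Nat.gcd d1 d2 ∣ y))
        ((Nat.gcd_dvd_left d1 d2).trans (Nat.gcd_dvd_right y z) : Nat.gcd d1 d2 ∣ z)
    rw [hcop] at h
    exact Nat.dvd_one.mp h
  have h12z : d1 * d2 ∣ z :=
    hc12.mul_dvd_of_dvd_of_dvd (Nat.gcd_dvd_right y z) (Nat.gcd_dvd_right x z)
  have hgyz : g ∣ y * z := by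
    rw [hgdef]
    have : d1 * d2 * d3 ∣ z * y := mul_dvd_mul h12z (Nat.gcd_dvd_right x y)
    rwa [mul_comm z y] at this
  have hgxz : g ∣ x * z := by
    rw [hgdef]
    have : d1 * d2 * d3 ∣ z * x := mul_dvd_mul h12z (Nat.gcd_dvd_left x y)
    rwa [mul_comm z x] at this
  have hgG : g ∣ Nat.gcd (y * (x - z)) (x * (y - z)) := by
    rw [hkey]; exact dvd_mul_right _ _
  have hgA : g ∣ y * (x - z) := hgG.trans (Nat.gcd_dvd_left _ _)
  have hgB : g ∣ x * (y - z) := hgG.trans (Nat.gcd_dvd_right _ _)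
  have hgxy : g ∣ x * y := by
    have h1 : x * y = y * (x - z) + y * z := by
      rw [Nat.mul_sub, Nat.sub_add_cancel (Nat.mul_le_mul le_rfl (by omega : z ≤ x))]
      ring
    rw [h1]; exact Nat.dvd_add hgA hgyz
  -- divide the key identity by g
  have hmain : Nat.gcd (y * (x - z) / g) (x * (y - z) / g) = Nat.gcd (x - z) (y - z) := by
    have h1 : y * (x - z) = g * (y * (x - z) / g) := (Nat.mul_div_cancel' hgA).symm
    have h2 : x * (y - z) = g * (x * (y - z) / g) := (Nat.mul_div_cancel' hgB).symm
    have h3 : g * Nat.gcd (y * (x - z) / g) (x * (y - z) / g)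
        = g * Nat.gcd (x - z) (y - z) := by
      rw [← Nat.gcd_mul_left, ← h1, ← h2, hkey]
    exact Nat.eq_of_mul_eq_mul_left hg0 h3
  refine ⟨?_, hmain⟩
  have e1 : x * y / g - y * z / g = y * (x - z) / g := by
    rw [div_sub_div' g _ _ hg0 hgxy hgyz]
    congr 1
    rw [Nat.mul_sub, mul_comm y x]
  have e2 : x * y / g - x * z / g = x * (y - z) / g := by
    rw [div_sub_div' g _ _ hg0 hgxy hgxz]
    congr 1
    rw [Nat.mul_sub]
  rw [e1, e2, hmain]
end

section
/- Let x > y > z > 0 be integers with gcd(x,y,z)=1, and set d1 = gcd(y,z), d2 = gcd(x,z), d3 = gcd(x,y), d4 = gcd(x−z,y−z), e1 = (y−z)/(d1 d4), e2 = (x−z)/(d2 d4), e3 = (x−y)/(d3 d4). For the Cremona image with reduced coordinates X' = yz/(d1 d2 d3), Y' = xz/(d1 d2 d3), Z' = xy/(d1 d2 d3), define e1' = (Y'−X')/(gcd(X',Y')·d4), e2' = (Z'−X')/(gcd(X',Z')·d4), e3' = (Z'−Y')/(gcd(Y',Z')·d4). Then (e1', e2', e3') = (e3, e2, e1). -/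
/-- The Cremona involution reverses the triple (e1,e2,e3). -/
theorem stmt_5 (x y z : ℕ) (hz : 0 < z) (hzy : z < y) (hyx : y < x)
    (hcop : Nat.gcd (Nat.gcd x y) z = 1)
    (d1 d2 d3 d4 e1 e2 e3 X' Y' Z' e1' e2' e3' : ℕ)
    (hd1 : d1 = Nat.gcd y z) (hd2 : d2 = Nat.gcd x z) (hd3 : d3 = Nat.gcd x y)
    (hd4 : d4 = Nat.gcd (x - z) (y - z))
    (he1 : e1 = (y - z) / (d1 * d4)) (he2 : e2 = (x - z) / (d2 * d4))
    (he3 : e3 = (x - y) / (d3 * d4))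
    (hX : X' = y * z / (d1 * d2 * d3)) (hY : Y' = x * z / (d1 * d2 * d3))
    (hZ : Z' = x * y / (d1 * d2 * d3))
    (he1' : e1' = (Y' - X') / (Nat.gcd X' Y' * d4))
    (he2' : e2' = (Z' - X') / (Nat.gcd X' Z' * d4))
    (he3' : e3' = (Z' - Y') / (Nat.gcd Y' Z' * d4)) :
    e1' = e3 ∧ e2' = e2 ∧ e3' = e1 := by
  subst hd1 hd2 hd3 hd4 hX hY hZ he1 he2 he3 he1' he2' he3'
  have hx0 : 0 < x := by omega
  have hy0 : 0 < y := by omega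
  set d1 := Nat.gcd y z with hd1
  set d2 := Nat.gcd x z with hd2
  set d3 := Nat.gcd x y with hd3
  set d4 := Nat.gcd (x - z) (y - z) with hd4
  have hd1p : 0 < d1 := Nat.gcd_pos_of_pos_left z hy0
  have hd2p : 0 < d2 := Nat.gcd_pos_of_pos_left z hx0
  have hd3p : 0 < d3 := Nat.gcd_pos_of_pos_left y hx0
  have c12 : Nat.Coprime d1 d2 := by
    have h : Nat.gcd d1 d2 ∣ Nat.gcd (Nat.gcd x y) z :=
      Nat.dvd_gcd (Nat.dvd_gcd ((Nat.gcd_dvd_right d1 d2).trans (Nat.gcd_dvd_left x z))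
        ((Nat.gcd_dvd_left d1 d2).trans (Nat.gcd_dvd_left y z)))
        ((Nat.gcd_dvd_left d1 d2).trans (Nat.gcd_dvd_right y z))
    rw [hcop] at h
    exact Nat.dvd_one.mp h
  have c13 : Nat.Coprime d1 d3 := by
    have h : Nat.gcd d1 d3 ∣ Nat.gcd (Nat.gcd x y) z :=
      Nat.dvd_gcd (Nat.dvd_gcd ((Nat.gcd_dvd_right d1 d3).trans (Nat.gcd_dvd_left x y))
        ((Nat.gcd_dvd_left d1 d3).trans (Nat.gcd_dvd_left y z)))
        ((Nat.gcd_dvd_left d1 d3).trans (Nat.gcd_dvd_right y z))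
    rw [hcop] at h
    exact Nat.dvd_one.mp h
  have c23 : Nat.Coprime d2 d3 := by
    have h : Nat.gcd d2 d3 ∣ Nat.gcd (Nat.gcd x y) z :=
      Nat.dvd_gcd (Nat.dvd_gcd ((Nat.gcd_dvd_left d2 d3).trans (Nat.gcd_dvd_left x z))
        ((Nat.gcd_dvd_right d2 d3).trans (Nat.gcd_dvd_right x y)))
        ((Nat.gcd_dvd_left d2 d3).trans (Nat.gcd_dvd_right x z))
    rw [hcop] at h
    exact Nat.dvd_one.mp h
  obtain ⟨a, ha⟩ : d2 * d3 ∣ x :=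
    c23.mul_dvd_of_dvd_of_dvd (Nat.gcd_dvd_left x z) (Nat.gcd_dvd_left x y)
  obtain ⟨b, hb⟩ : d1 * d3 ∣ y :=
    c13.mul_dvd_of_dvd_of_dvd (Nat.gcd_dvd_left y z) (Nat.gcd_dvd_right x y)
  obtain ⟨c, hc⟩ : d1 * d2 ∣ z :=
    c12.mul_dvd_of_dvd_of_dvd (Nat.gcd_dvd_right y z) (Nat.gcd_dvd_right x z)
  have ha0 : 0 < a := by
    rcases Nat.eq_zero_or_pos a with h | h
    · subst h; simp at ha; omega
    · exact h
  have hb0 : 0 < b := by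
    rcases Nat.eq_zero_or_pos b with h | h
    · subst h; simp at hb; omega
    · exact h
  have hc0 : 0 < c := by
    rcases Nat.eq_zero_or_pos c with h | h
    · subst h; simp at hc; omega
    · exact h
  -- reduced coprimalities
  have key3 : Nat.gcd (d2 * a) (d1 * b) = 1 := by
    have h : d3 * Nat.gcd (d2 * a) (d1 * b) = d3 * 1 := by
      rw [← Nat.gcd_mul_left, mul_one,
        show d3 * (d2 * a) = x from by rw [ha]; ring,
        show d3 * (d1 * b) = y from by rw [hb]; ring]
    exact Nat.eq_of_mul_eq_mul_left hd3p h
  have key2 : Nat.gcd (d3 * a) (d1 * c) = 1 := by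
    have h : d2 * Nat.gcd (d3 * a) (d1 * c) = d2 * 1 := by
      rw [← Nat.gcd_mul_left, mul_one,
        show d2 * (d3 * a) = x from by rw [ha]; ring,
        show d2 * (d1 * c) = z from by rw [hc]; ring]
    exact Nat.eq_of_mul_eq_mul_left hd2p h
  have key1 : Nat.gcd (d3 * b) (d2 * c) = 1 := by
    have h : d1 * Nat.gcd (d3 * b) (d2 * c) = d1 * 1 := by
      rw [← Nat.gcd_mul_left, mul_one,
        show d1 * (d3 * b) = y from by rw [hb]; ring,
        show d1 * (d2 * c) = z from by rw [hc]; ring]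
    exact Nat.eq_of_mul_eq_mul_left hd1p h
  have hgpos : 0 < d1 * d2 * d3 := Nat.mul_pos (Nat.mul_pos hd1p hd2p) hd3p
  have eX : y * z / (d1 * d2 * d3) = d1 * b * c := by
    rw [hb, hc, show d1 * d3 * b * (d1 * d2 * c) = d1 * d2 * d3 * (d1 * b * c) from by ring]
    exact Nat.mul_div_cancel_left _ hgpos
  have eY : x * z / (d1 * d2 * d3) = d2 * a * c := by
    rw [ha, hc, show d2 * d3 * a * (d1 * d2 * c) = d1 * d2 * d3 * (d2 * a * c) from by ring]
    exact Nat.mul_div_cancel_left _ hgpos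
  have eZ : x * y / (d1 * d2 * d3) = d3 * a * b := by
    rw [ha, hb, show d2 * d3 * a * (d1 * d3 * b) = d1 * d2 * d3 * (d3 * a * b) from by ring]
    exact Nat.mul_div_cancel_left _ hgpos
  rw [eX, eY, eZ]
  refine ⟨?_, ?_, ?_⟩
  · -- e1' = e3
    have hg : Nat.gcd (d1 * b * c) (d2 * a * c) = c := by
      rw [show d1 * b * c = c * (d1 * b) from by ring,
        show d2 * a * c = c * (d2 * a) from by ring, Nat.gcd_mul_left,
        Nat.gcd_comm, key3, mul_one]
    rw [hg, show d2 * a * c - d1 * b * c = c * (d2 * a - d1 * b) from by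
        rw [Nat.mul_sub]; ring_nf,
      Nat.mul_div_mul_left _ _ hc0,
      show x - y = d3 * (d2 * a - d1 * b) from by
        rw [Nat.mul_sub, ha, hb]; ring_nf,
      Nat.mul_div_mul_left _ _ hd3p]
  · -- e2' = e2
    have hg : Nat.gcd (d1 * b * c) (d3 * a * b) = b := by
      rw [show d1 * b * c = b * (d1 * c) from by ring,
        show d3 * a * b = b * (d3 * a) from by ring, Nat.gcd_mul_left,
        Nat.gcd_comm, key2, mul_one]
    rw [hg, show d3 * a * b - d1 * b * c = b * (d3 * a - d1 * c) from by
        rw [Nat.mul_sub]; ring_nf,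
      Nat.mul_div_mul_left _ _ hb0,
      show x - z = d2 * (d3 * a - d1 * c) from by
        rw [Nat.mul_sub, ha, hc]; ring_nf,
      Nat.mul_div_mul_left _ _ hd2p]
  · -- e3' = e1
    have hg : Nat.gcd (d2 * a * c) (d3 * a * b) = a := by
      rw [show d2 * a * c = a * (d2 * c) from by ring,
        show d3 * a * b = a * (d3 * b) from by ring, Nat.gcd_mul_left,
        Nat.gcd_comm, key1, mul_one]
    rw [hg, show d3 * a * b - d2 * a * c = a * (d3 * b - d2 * c) from by
        rw [Nat.mul_sub]; ring_nf,
      Nat.mul_div_mul_left _ _ ha0,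
      show y - z = d1 * (d3 * b - d2 * c) from by
        rw [Nat.mul_sub, hb, hc]; ring_nf,
      Nat.mul_div_mul_left _ _ hd1p]
end

section
/- Let x > y > z > 0 be integers with gcd(x,y,z)=1, with d1, d2, d3, d4 and e1, e2, e3 as above. Then e1, e2, e3 are pairwise coprime positive integers. -/
/-- The parameters e1, e2, e3 are pairwise coprime positive integers. -/
theorem stmt_6 (x y z : ℕ) (hz : 0 < z) (hzy : z < y) (hyx : y < x)
    (hcop : Nat.gcd (Nat.gcd x y) z = 1)
    (d1 d2 d3 d4 e1 e2 e3 : ℕ)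
    (hd1 : d1 = Nat.gcd y z) (hd2 : d2 = Nat.gcd x z) (hd3 : d3 = Nat.gcd x y)
    (hd4 : d4 = Nat.gcd (x - z) (y - z))
    (he1 : e1 = (y - z) / (d1 * d4)) (he2 : e2 = (x - z) / (d2 * d4))
    (he3 : e3 = (x - y) / (d3 * d4)) :
    0 < e1 ∧ 0 < e2 ∧ 0 < e3 ∧
    Nat.gcd e1 e2 = 1 ∧ Nat.gcd e1 e3 = 1 ∧ Nat.gcd e2 e3 = 1 := by
  have ha : 0 < y - z := by omega
  have hb : 0 < x - z := by omega
  have hc : 0 < x - y := by omega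
  have key : ∀ g : ℕ, g ∣ x → g ∣ y → g ∣ z → g = 1 := fun g hgx hgy hgz =>
    Nat.dvd_one.mp (hcop ▸ Nat.dvd_gcd (Nat.dvd_gcd hgx hgy) hgz)
  have hd4b : d4 ∣ x - z := hd4 ▸ Nat.gcd_dvd_left _ _
  have hd4a : d4 ∣ y - z := hd4 ▸ Nat.gcd_dvd_right _ _
  have hd4c : d4 ∣ x - y := by
    have := Nat.dvd_sub hd4b hd4a
    simpa [show x - z - (y - z) = x - y by omega] using this
  have hd4pos : 0 < d4 := by rw [hd4]; exact Nat.gcd_pos_of_pos_left _ hb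
  -- d1, d2, d3 divisibilities
  have hd1y : d1 ∣ y := hd1 ▸ Nat.gcd_dvd_left _ _
  have hd1z : d1 ∣ z := hd1 ▸ Nat.gcd_dvd_right _ _
  have hd2x : d2 ∣ x := hd2 ▸ Nat.gcd_dvd_left _ _
  have hd2z : d2 ∣ z := hd2 ▸ Nat.gcd_dvd_right _ _
  have hd3x : d3 ∣ x := hd3 ▸ Nat.gcd_dvd_left _ _
  have hd3y : d3 ∣ y := hd3 ▸ Nat.gcd_dvd_right _ _
  have hd1a : d1 ∣ y - z := Nat.dvd_sub hd1y hd1z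
  have hd2b : d2 ∣ x - z := Nat.dvd_sub hd2x hd2z
  have hd3c : d3 ∣ x - y := Nat.dvd_sub hd3x hd3y
  have hd1pos : 0 < d1 := by rw [hd1]; exact Nat.gcd_pos_of_pos_left _ (by omega)
  have hd2pos : 0 < d2 := by rw [hd2]; exact Nat.gcd_pos_of_pos_left _ (by omega)
  have hd3pos : 0 < d3 := by rw [hd3]; exact Nat.gcd_pos_of_pos_left _ (by omega)
  -- coprimality of d_i with d4
  have h14 : Nat.Coprime d1 d4 := by
    apply key
    · have h1 : Nat.gcd d1 d4 ∣ z := (Nat.gcd_dvd_left _ _).trans hd1z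
      have h2 : Nat.gcd d1 d4 ∣ x - z := (Nat.gcd_dvd_right _ _).trans hd4b
      simpa [show x - z + z = x by omega] using Nat.dvd_add h2 h1
    · exact (Nat.gcd_dvd_left _ _).trans hd1y
    · exact (Nat.gcd_dvd_left _ _).trans hd1z
  have h24 : Nat.Coprime d2 d4 := by
    apply key
    · exact (Nat.gcd_dvd_left _ _).trans hd2x
    · have h1 : Nat.gcd d2 d4 ∣ z := (Nat.gcd_dvd_left _ _).trans hd2z
      have h2 : Nat.gcd d2 d4 ∣ y - z := (Nat.gcd_dvd_right _ _).trans hd4a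
      simpa [show y - z + z = y by omega] using Nat.dvd_add h2 h1
    · exact (Nat.gcd_dvd_left _ _).trans hd2z
  have h34 : Nat.Coprime d3 d4 := by
    apply key
    · exact (Nat.gcd_dvd_left _ _).trans hd3x
    · exact (Nat.gcd_dvd_left _ _).trans hd3y
    · have h1 : Nat.gcd d3 d4 ∣ x := (Nat.gcd_dvd_left _ _).trans hd3x
      have h2 : Nat.gcd d3 d4 ∣ x - z := (Nat.gcd_dvd_right _ _).trans hd4b
      simpa [show x - (x - z) = z by omega] using Nat.dvd_sub h1 h2
  have hdvd1 : d1 * d4 ∣ y - z := Nat.Coprime.mul_dvd_of_dvd_of_dvd h14 hd1a hd4a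
  have hdvd2 : d2 * d4 ∣ x - z := Nat.Coprime.mul_dvd_of_dvd_of_dvd h24 hd2b hd4b
  have hdvd3 : d3 * d4 ∣ x - y := Nat.Coprime.mul_dvd_of_dvd_of_dvd h34 hd3c hd4c
  have he1pos : 0 < e1 := by
    rw [he1]; exact Nat.div_pos (Nat.le_of_dvd ha hdvd1) (Nat.mul_pos hd1pos hd4pos)
  have he2pos : 0 < e2 := by
    rw [he2]; exact Nat.div_pos (Nat.le_of_dvd hb hdvd2) (Nat.mul_pos hd2pos hd4pos)
  have he3pos : 0 < e3 := by
    rw [he3]; exact Nat.div_pos (Nat.le_of_dvd hc hdvd3) (Nat.mul_pos hd3pos hd4pos)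
  -- e_i divides (difference)/d4
  have hq1 : (y - z) / d4 = e1 * d1 := by
    have h := Nat.div_mul_cancel hdvd1
    rw [he1]
    calc (y - z) / d4 = ((y - z) / (d1 * d4) * (d1 * d4)) / d4 := by rw [h]
    _ = (y - z) / (d1 * d4) * d1 := by
        rw [show (y - z) / (d1 * d4) * (d1 * d4) = (y - z) / (d1 * d4) * d1 * d4 by ring,
          Nat.mul_div_cancel _ hd4pos]
  have hq2 : (x - z) / d4 = e2 * d2 := by
    have h := Nat.div_mul_cancel hdvd2
    rw [he2]
    calc (x - z) / d4 = ((x - z) / (d2 * d4) * (d2 * d4)) / d4 := by rw [h]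
    _ = (x - z) / (d2 * d4) * d2 := by
        rw [show (x - z) / (d2 * d4) * (d2 * d4) = (x - z) / (d2 * d4) * d2 * d4 by ring,
          Nat.mul_div_cancel _ hd4pos]
  have hq3 : (x - y) / d4 = e3 * d3 := by
    have h := Nat.div_mul_cancel hdvd3
    rw [he3]
    calc (x - y) / d4 = ((x - y) / (d3 * d4) * (d3 * d4)) / d4 := by rw [h]
    _ = (x - y) / (d3 * d4) * d3 := by
        rw [show (x - y) / (d3 * d4) * (d3 * d4) = (x - y) / (d3 * d4) * d3 * d4 by ring,
          Nat.mul_div_cancel _ hd4pos]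
  have he1dvd : e1 ∣ (y - z) / d4 := ⟨d1, hq1⟩
  have he2dvd : e2 ∣ (x - z) / d4 := ⟨d2, hq2⟩
  have he3dvd : e3 ∣ (x - y) / d4 := ⟨d3, hq3⟩
  -- d4 is also gcd(a,c) and gcd(b,c)
  have hgac : Nat.gcd (y - z) (x - y) = d4 := by
    apply Nat.dvd_antisymm
    · apply hd4 ▸ Nat.dvd_gcd
      · have h1 := Nat.gcd_dvd_left (y - z) (x - y)
        have h2 := Nat.gcd_dvd_right (y - z) (x - y)
        simpa [show y - z + (x - y) = x - z by omega] using Nat.dvd_add h1 h2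
      · exact Nat.gcd_dvd_left _ _
    · exact Nat.dvd_gcd hd4a hd4c
  have hgbc : Nat.gcd (x - z) (x - y) = d4 := by
    apply Nat.dvd_antisymm
    · apply hd4 ▸ Nat.dvd_gcd
      · exact Nat.gcd_dvd_left _ _
      · have h1 := Nat.gcd_dvd_left (x - z) (x - y)
        have h2 := Nat.gcd_dvd_right (x - z) (x - y)
        simpa [show x - z - (x - y) = y - z by omega] using Nat.dvd_sub h1 h2
    · exact Nat.dvd_gcd hd4b hd4c
  -- pairwise coprimality of the quotients
  have cop_ba : Nat.Coprime ((x - z) / d4) ((y - z) / d4) := by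
    have := Nat.coprime_div_gcd_div_gcd (m := x - z) (n := y - z) (hd4 ▸ hd4pos)
    rwa [← hd4] at this
  have cop_ac : Nat.Coprime ((y - z) / d4) ((x - y) / d4) := by
    have := Nat.coprime_div_gcd_div_gcd (m := y - z) (n := x - y) (hgac ▸ hd4pos)
    rwa [hgac] at this
  have cop_bc : Nat.Coprime ((x - z) / d4) ((x - y) / d4) := by
    have := Nat.coprime_div_gcd_div_gcd (m := x - z) (n := x - y) (hgbc ▸ hd4pos)
    rwa [hgbc] at this
  refine ⟨he1pos, he2pos, he3pos, ?_, ?_, ?_⟩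
  · exact Nat.Coprime.coprime_dvd_left he1dvd
      (Nat.Coprime.coprime_dvd_right he2dvd cop_ba.symm)
  · exact Nat.Coprime.coprime_dvd_left he1dvd
      (Nat.Coprime.coprime_dvd_right he3dvd cop_ac)
  · exact Nat.Coprime.coprime_dvd_left he2dvd
      (Nat.Coprime.coprime_dvd_right he3dvd cop_bc)
end

section
/- Let a, b, u, v be integers with 0 < −a < b, u, v > 0, gcd(a,b) = 1, gcd(u,v) = 1, and set x = ub+v, y = −ua+v, z = v. Then gcd(y, z) = gcd(a, v), gcd(x, z) = gcd(b, v), and gcd(x, y) = gcd(ub+v, a+b). -/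
lemma gcd_add_mul_aux (k m v : ℤ) : Int.gcd (k + m * v) v = Int.gcd k v := by
  apply Nat.dvd_antisymm
  · rw [← Int.natCast_dvd_natCast]
    refine Int.dvd_coe_gcd ?_ (Int.gcd_dvd_right ..)
    have h1 : (Int.gcd (k+m*v) v : ℤ) ∣ (k+m*v) := Int.gcd_dvd_left ..
    have h2 : (Int.gcd (k+m*v) v : ℤ) ∣ v := Int.gcd_dvd_right ..
    have := dvd_sub h1 (h2.mul_left m)
    simpa using this
  · rw [← Int.natCast_dvd_natCast]
    exact Int.dvd_coe_gcd (dvd_add (Int.gcd_dvd_left .. : _ ∣ k) ((Int.gcd_dvd_right .. : _ ∣ v).mul_left m))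
      (Int.gcd_dvd_right .. : _ ∣ v)

lemma gcd_mul_cancel_aux (u a v : ℤ) (h : Int.gcd u v = 1) :
    Int.gcd (u * a) v = Int.gcd a v := by
  have : Nat.Coprime u.natAbs v.natAbs := h
  rw [Int.gcd_def, Int.gcd_def, Int.natAbs_mul]
  exact Nat.Coprime.gcd_mul_left_cancel _ this

/-- gcd identities for the parametrized point (ub+v, −ua+v, v). -/
theorem stmt_8 (a b u v x y z : ℤ)
    (ha : 0 < -a) (hab : -a < b) (hu : 0 < u) (hv : 0 < v)
    (hcab : Int.gcd a b = 1) (hcuv : Int.gcd u v = 1)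
    (hx : x = u * b + v) (hy : y = -(u * a) + v) (hz : z = v) :
    Int.gcd y z = Int.gcd a v ∧ Int.gcd x z = Int.gcd b v ∧
    Int.gcd x y = Int.gcd (u * b + v) (a + b) := by
  subst hx hy
  rw [hz]
  refine ⟨?_, ?_, ?_⟩
  · have e : -(u * a) + v = u * (-a) + 1 * v := by ring
    rw [e, gcd_add_mul_aux, gcd_mul_cancel_aux u (-a) v hcuv, Int.neg_gcd]
  · have e : u * b + v = u * b + 1 * v := by ring
    rw [e, gcd_add_mul_aux, gcd_mul_cancel_aux u b v hcuv]
  · set X := u * b + v with hX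
    have hXu : Int.gcd u X = 1 := by
      have e : X = v + b * u := by rw [hX]; ring
      rw [Int.gcd_comm, e, gcd_add_mul_aux, Int.gcd_comm]
      exact hcuv
    have e : -(u * a) + v = -(u * (a + b)) + 1 * X := by rw [hX]; ring
    rw [e, Int.gcd_comm, gcd_add_mul_aux, Int.neg_gcd,
      gcd_mul_cancel_aux u (a + b) X hXu, Int.gcd_comm]
end

section
/- Let a, b be coprime integers with 0 < −a < b, let u be a positive integer, and let e1, e2, e3 be pairwise coprime positive integers with e1 ∣ −a, e2 ∣ b, e3 ∣ a+b; write e = e1e2e3 and suppose gcd(u, ab(a+b)/e) = 1. Fix integers p, q with pa + qb = 1. Then a positive integer v satisfies gcd(a,v) = −a/e1, gcd(b,v) = b/e2, gcd(−ua+v, a+b) = (a+b)/e3, and gcd(u,v) = 1 if and only if v ∈ {u(q−p)ab + (ab(a+b)/e)·n : n ∈ ℤ, gcd(n, ue) = 1}. -/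
lemma lgcd_neg_left (x y : ℤ) : Int.gcd (-x) y = Int.gcd x y := by simp [Int.gcd]

lemma lgcd_neg_right (x y : ℤ) : Int.gcd x (-y) = Int.gcd x y := by simp [Int.gcd]

lemma lgcd_add_mul (x y k : ℤ) : Int.gcd x (y + x * k) = Int.gcd x y := by
  apply Nat.dvd_antisymm
  · apply Int.natCast_dvd_natCast.mp
    have h1 : (↑(Int.gcd x (y + x * k)) : ℤ) ∣ x := Int.gcd_dvd_left _ _
    have h2 : (↑(Int.gcd x (y + x * k)) : ℤ) ∣ y + x * k := Int.gcd_dvd_right _ _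
    have h3 : (↑(Int.gcd x (y + x * k)) : ℤ) ∣ y := by
      have := h2.sub (h1.mul_right k); simpa using this
    exact Int.dvd_coe_gcd h1 h3
  · apply Int.natCast_dvd_natCast.mp
    have h1 : (↑(Int.gcd x y) : ℤ) ∣ x := Int.gcd_dvd_left _ _
    have h2 : (↑(Int.gcd x y) : ℤ) ∣ y := Int.gcd_dvd_right _ _
    exact Int.dvd_coe_gcd h1 (h2.add (h1.mul_right k))

lemma lgcd_mul_cancel {x y : ℤ} (z : ℤ) (h : IsCoprime x y) :
    Int.gcd x (y * z) = Int.gcd x z := by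
  have hc : Nat.Coprime y.natAbs x.natAbs := by
    have h1 : Int.gcd x y = 1 := Int.isCoprime_iff_gcd_eq_one.mp h
    exact Nat.coprime_comm.mp h1
  rw [Int.gcd, Int.gcd, Int.natAbs_mul]
  exact hc.gcd_mul_left_cancel_right z.natAbs

/-- Characterization of the admissible values of v as a coprimality-restricted
arithmetic progression. -/
theorem stmt_12 (a b u e1 e2 e3 e p q : ℤ)
    (ha : 0 < -a) (hab : -a < b) (hcab : Int.gcd a b = 1) (hu : 0 < u)
    (he1 : 0 < e1) (he2 : 0 < e2) (he3 : 0 < e3)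
    (h12 : Int.gcd e1 e2 = 1) (h13 : Int.gcd e1 e3 = 1) (h23 : Int.gcd e2 e3 = 1)
    (hd1 : e1 ∣ -a) (hd2 : e2 ∣ b) (hd3 : e3 ∣ a + b)
    (he : e = e1 * e2 * e3)
    (hue : Int.gcd u (a * b * (a + b) / e) = 1)
    (hpq : p * a + q * b = 1) :
    ∀ v : ℤ, 0 < v →
      (((Int.gcd a v : ℤ) = -a / e1 ∧ (Int.gcd b v : ℤ) = b / e2 ∧
        (Int.gcd (-(u * a) + v) (a + b) : ℤ) = (a + b) / e3 ∧ Int.gcd u v = 1) ↔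
      (∃ n : ℤ, v = u * (q - p) * a * b + (a * b * (a + b) / e) * n ∧
        Int.gcd n (u * e) = 1)) := by
  obtain ⟨A', hA'⟩ := hd1
  obtain ⟨B', hB'⟩ := hd2
  obtain ⟨C', hC'⟩ := hd3
  have ha' : a = -(e1 * A') := by linarith
  have hb0 : 0 < b := lt_trans ha hab
  have hab0 : 0 < a + b := by linarith
  have hA'pos : 0 < A' := by
    by_contra hc; push_neg at hc; nlinarith
  have hB'pos : 0 < B' := by
    by_contra hc; push_neg at hc; nlinarith
  have hC'pos : 0 < C' := by
    by_contra hc; push_neg at hc; nlinarith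
  have he0 : e ≠ 0 := by
    rw [he]; exact (mul_pos (mul_pos he1 he2) he3).ne'
  have hAeq : -a / e1 = A' := by rw [hA', Int.mul_ediv_cancel_left _ he1.ne']
  have hBeq : b / e2 = B' := by rw [hB', Int.mul_ediv_cancel_left _ he2.ne']
  have hCeq : (a + b) / e3 = C' := by rw [hC', Int.mul_ediv_cancel_left _ he3.ne']
  have hMeq : a * b * (a + b) / e = -(A' * B' * C') := by
    have h1 : a * b * (a + b) = e * -(A' * B' * C') := by
      rw [hC', ha', hB', he]; ring
    rw [h1, Int.mul_ediv_cancel_left _ he0]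
  -- coprimality setup
  have cab : IsCoprime a b := Int.isCoprime_iff_gcd_eq_one.mpr hcab
  have cac : IsCoprime a (a + b) := by
    have h := cab.add_mul_left_right 1
    rw [mul_one] at h
    rwa [add_comm] at h
  have cbc : IsCoprime b (a + b) := by
    have h := cab.symm.add_mul_left_right 1
    rwa [mul_one] at h
  have de1 : e1 ∣ a := ⟨-A', by rw [ha']; ring⟩
  have dA' : A' ∣ a := ⟨-e1, by rw [ha']; ring⟩
  have de2 : e2 ∣ b := ⟨B', hB'⟩
  have dB' : B' ∣ b := ⟨e2, by rw [hB']; ring⟩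
  have de3 : e3 ∣ a + b := ⟨C', hC'⟩
  have dC' : C' ∣ a + b := ⟨e3, by rw [hC']; ring⟩
  have c_e1_B' : IsCoprime e1 B' :=
    (cab.of_isCoprime_of_dvd_left de1).of_isCoprime_of_dvd_right dB'
  have c_e1_C' : IsCoprime e1 C' :=
    (cac.of_isCoprime_of_dvd_left de1).of_isCoprime_of_dvd_right dC'
  have c_e2_A' : IsCoprime e2 A' :=
    (cab.symm.of_isCoprime_of_dvd_left de2).of_isCoprime_of_dvd_right dA'
  have c_e2_C' : IsCoprime e2 C' :=
    (cbc.of_isCoprime_of_dvd_left de2).of_isCoprime_of_dvd_right dC'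
  have c_e3_A' : IsCoprime e3 A' :=
    (cac.symm.of_isCoprime_of_dvd_left de3).of_isCoprime_of_dvd_right dA'
  have c_e3_B' : IsCoprime e3 B' :=
    (cbc.symm.of_isCoprime_of_dvd_left de3).of_isCoprime_of_dvd_right dB'
  have c_A'_B' : IsCoprime A' B' :=
    (cab.of_isCoprime_of_dvd_left dA').of_isCoprime_of_dvd_right dB'
  have c_A'_C' : IsCoprime A' C' :=
    (cac.of_isCoprime_of_dvd_left dA').of_isCoprime_of_dvd_right dC'
  have c_B'_C' : IsCoprime B' C' :=
    (cbc.of_isCoprime_of_dvd_left dB').of_isCoprime_of_dvd_right dC'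
  rw [hMeq] at hue
  have c_u_P : IsCoprime u (A' * B' * C') := by
    have h := Int.isCoprime_iff_gcd_eq_one.mpr hue
    exact (IsCoprime.neg_right_iff _ _).mp h
  -- key identity: -(u*a) + v0 = -(u*a*p) * (a+b)
  -- key computational lemmas
  have K1 : ∀ n : ℤ, (Int.gcd a (u * (q - p) * a * b + -(A' * B' * C') * n) : ℤ)
      = A' * Int.gcd e1 n := by
    intro n
    have hw : u * (q - p) * a * b + -(A' * B' * C') * n
        = (-(B' * C' * n) + e1 * (-(u * (q - p) * B' * e2))) * A' := by
      rw [ha', hB']; ring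
    rw [hw, ha', lgcd_neg_left, Int.gcd_mul_right, lgcd_add_mul, lgcd_neg_right]
    have h2 : Int.gcd e1 (B' * C' * n) = Int.gcd e1 n := by
      rw [mul_assoc, lgcd_mul_cancel _ c_e1_B', lgcd_mul_cancel _ c_e1_C']
    rw [h2]
    push_cast [Int.natAbs_of_nonneg hA'pos.le]
    ring
  have K2 : ∀ n : ℤ, (Int.gcd b (u * (q - p) * a * b + -(A' * B' * C') * n) : ℤ)
      = B' * Int.gcd e2 n := by
    intro n
    have hw : u * (q - p) * a * b + -(A' * B' * C') * n
        = (-(A' * C' * n) + e2 * (u * (q - p) * a)) * B' := by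
      rw [hB']; ring
    rw [hw, hB', Int.gcd_mul_right, lgcd_add_mul, lgcd_neg_right]
    have h2 : Int.gcd e2 (A' * C' * n) = Int.gcd e2 n := by
      rw [mul_assoc, lgcd_mul_cancel _ c_e2_A', lgcd_mul_cancel _ c_e2_C']
    rw [h2]
    push_cast [Int.natAbs_of_nonneg hB'pos.le]
    ring
  have K3 : ∀ n : ℤ, (Int.gcd (-(u * a) + (u * (q - p) * a * b + -(A' * B' * C') * n))
      (a + b) : ℤ) = C' * Int.gcd e3 n := by
    intro n
    have hw : -(u * a) + (u * (q - p) * a * b + -(A' * B' * C') * n)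
        = (-(A' * B' * n) + e3 * (-(u * a * p))) * C' := by
      linear_combination (u * a) * hpq - (u * a * p) * hC'
    rw [hw, hC', Int.gcd_mul_right, Int.gcd_comm (-(A' * B' * n) + e3 * -(u * a * p)) e3,
      lgcd_add_mul, lgcd_neg_right]
    have h2 : Int.gcd e3 (A' * B' * n) = Int.gcd e3 n := by
      rw [mul_assoc, lgcd_mul_cancel _ c_e3_A', lgcd_mul_cancel _ c_e3_B']
    rw [h2]
    push_cast [Int.natAbs_of_nonneg hC'pos.le]
    ring
  have K4 : ∀ n : ℤ, Int.gcd u (u * (q - p) * a * b + -(A' * B' * C') * n)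
      = Int.gcd u n := by
    intro n
    have hw : u * (q - p) * a * b + -(A' * B' * C') * n
        = -(A' * B' * C' * n) + u * ((q - p) * a * b) := by ring
    rw [hw, lgcd_add_mul, lgcd_neg_right, lgcd_mul_cancel _ c_u_P]
  intro v hv
  rw [hAeq, hBeq, hCeq, hMeq]
  constructor
  · rintro ⟨g1, g2, g3, g4⟩
    -- divisibility of v - v0 by A', B', C'
    have hdvA : A' ∣ v := by
      have h : (↑(Int.gcd a v) : ℤ) ∣ v := Int.gcd_dvd_right _ _
      rwa [g1] at h
    have hdvB : B' ∣ v := by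
      have h : (↑(Int.gcd b v) : ℤ) ∣ v := Int.gcd_dvd_right _ _
      rwa [g2] at h
    have hdvC : C' ∣ -(u * a) + v := by
      have h : (↑(Int.gcd (-(u * a) + v) (a + b)) : ℤ) ∣ -(u * a) + v := Int.gcd_dvd_left _ _
      rwa [g3] at h
    set v0 : ℤ := u * (q - p) * a * b with hv0
    have hv0A : A' ∣ v0 := (dA'.mul_left (u * (q - p))).mul_right b
    have hv0B : B' ∣ v0 := dB'.mul_left (u * (q - p) * a)
    have hv0C : C' ∣ -(u * a) + v0 := by
      have hid : -(u * a) + v0 = -(u * a * p) * (a + b) := by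
        rw [hv0]; linear_combination (u * a) * hpq
      rw [hid]
      exact dC'.mul_left _
    have hA1 : A' ∣ v - v0 := (Int.dvd_sub hdvA hv0A : _)
    have hB1 : B' ∣ v - v0 := (Int.dvd_sub hdvB hv0B : _)
    have hC1 : C' ∣ v - v0 := by
      have h := Int.dvd_sub hdvC hv0C
      simpa using h
    have htot : A' * B' * C' ∣ v - v0 :=
      (c_A'_C'.mul_left c_B'_C').mul_dvd (c_A'_B'.mul_dvd hA1 hB1) hC1
    obtain ⟨m, hm⟩ := htot
    refine ⟨-m, ?_, ?_⟩
    · linear_combination hm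
    · have hveq : v = v0 + -(A' * B' * C') * (-m) := by linear_combination hm
      rw [hveq] at g1 g2 g3 g4
      rw [K1] at g1
      rw [K2] at g2
      rw [K3] at g3
      rw [K4] at g4
      have hn1 : Int.gcd e1 (-m) = 1 := by
        have := mul_left_cancel₀ hA'pos.ne' (g1.trans (mul_one A').symm)
        exact_mod_cast this
      have hn2 : Int.gcd e2 (-m) = 1 := by
        have := mul_left_cancel₀ hB'pos.ne' (g2.trans (mul_one B').symm)
        exact_mod_cast this
      have hn3 : Int.gcd e3 (-m) = 1 := by
        have := mul_left_cancel₀ hC'pos.ne' (g3.trans (mul_one C').symm)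
        exact_mod_cast this
      have cn1 : IsCoprime (-m : ℤ) e1 := (Int.isCoprime_iff_gcd_eq_one.mpr hn1).symm
      have cn2 : IsCoprime (-m : ℤ) e2 := (Int.isCoprime_iff_gcd_eq_one.mpr hn2).symm
      have cn3 : IsCoprime (-m : ℤ) e3 := (Int.isCoprime_iff_gcd_eq_one.mpr hn3).symm
      have cnu : IsCoprime (-m : ℤ) u := (Int.isCoprime_iff_gcd_eq_one.mpr g4).symm
      have : IsCoprime (-m : ℤ) (u * e) := by
        rw [he]
        exact cnu.mul_right ((cn1.mul_right cn2).mul_right cn3)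
      exact Int.isCoprime_iff_gcd_eq_one.mp this
  · rintro ⟨n, hveq, hn⟩
    have cn : IsCoprime n (u * e) := Int.isCoprime_iff_gcd_eq_one.mpr hn
    have cnu : IsCoprime n u := cn.of_isCoprime_of_dvd_right (dvd_mul_right u e)
    have cne : IsCoprime n e := cn.of_isCoprime_of_dvd_right (dvd_mul_left e u)
    have cne1 : IsCoprime n e1 :=
      cne.of_isCoprime_of_dvd_right (by rw [he]; exact (dvd_mul_right e1 e2).mul_right e3)
    have cne2 : IsCoprime n e2 :=
      cne.of_isCoprime_of_dvd_right (by rw [he]; exact (dvd_mul_left e2 e1).mul_right e3)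
    have cne3 : IsCoprime n e3 :=
      cne.of_isCoprime_of_dvd_right (by rw [he]; exact dvd_mul_left e3 (e1 * e2))
    have hn1 : Int.gcd e1 n = 1 := Int.isCoprime_iff_gcd_eq_one.mp cne1.symm
    have hn2 : Int.gcd e2 n = 1 := Int.isCoprime_iff_gcd_eq_one.mp cne2.symm
    have hn3 : Int.gcd e3 n = 1 := Int.isCoprime_iff_gcd_eq_one.mp cne3.symm
    have hnu : Int.gcd u n = 1 := Int.isCoprime_iff_gcd_eq_one.mp cnu.symm
    subst hveq
    refine ⟨?_, ?_, ?_, ?_⟩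
    · rw [K1, hn1]; simp
    · rw [K2, hn2]; simp
    · rw [K3, hn3]; simp
    · rw [K4, hnu]
end

section
/- For a point [x:y:z] of ℙ¹×ℙ¹×ℙ¹-embedded type on the degree-6 del Pezzo surface with x,y,z positive integers, gcd(x,y,z)=1, written via the parametrization x = ub+v, y = −ua+v, z = v (with 0 < −a < b, gcd(a,b)=1, gcd(u,v)=1, u,v > 0), the anticanonical height satisfies H = (ub+v)²·(−ua+v)/(gcd(a,v)·gcd(b,v)·gcd(ub+v, a+b)). -/
private lemma igcd_add_mul_left (m n k : ℤ) : Int.gcd (m + n * k) n = Int.gcd m n := by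
  apply Nat.dvd_antisymm
  · rw [← Int.natCast_dvd_natCast]
    refine Int.dvd_coe_gcd ?_ (Int.gcd_dvd_right ..)
    have h1 : (Int.gcd (m + n * k) n : ℤ) ∣ (m + n * k) := Int.gcd_dvd_left ..
    have h2 : (Int.gcd (m + n * k) n : ℤ) ∣ n := Int.gcd_dvd_right ..
    simpa using h1.sub (h2.mul_right k)
  · rw [← Int.natCast_dvd_natCast]
    refine Int.dvd_coe_gcd ?_ (Int.gcd_dvd_right ..)
    have h1 : (Int.gcd m n : ℤ) ∣ m := Int.gcd_dvd_left ..
    have h2 : (Int.gcd m n : ℤ) ∣ n := Int.gcd_dvd_right ..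
    exact h1.add (h2.mul_right k)

private lemma igcd_mul_cancel {u v : ℤ} (b : ℤ) (h : Int.gcd u v = 1) :
    Int.gcd (u * b) v = Int.gcd b v := by
  rw [Int.gcd, Int.natAbs_mul, Int.gcd]
  exact Nat.Coprime.gcd_mul_left_cancel _ h

private lemma igcd_add_mul_right (n k m : ℤ) : Int.gcd n (n * k + m) = Int.gcd n m := by
  rw [Int.gcd_comm, add_comm, igcd_add_mul_left, Int.gcd_comm]

/-- The anticanonical height in terms of the line parametrization x = ub+v,
y = −ua+v, z = v. -/
theorem stmt_17 (a b u v x y z : ℤ)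
    (ha : 0 < -a) (hab : -a < b) (hu : 0 < u) (hv : 0 < v)
    (hcab : Int.gcd a b = 1) (hcuv : Int.gcd u v = 1)
    (hx : x = u * b + v) (hy : y = -(u * a) + v) (hz : z = v) :
    ((max x y * max y z * max x z : ℤ) : ℚ) /
        ((Int.gcd x y * Int.gcd y z * Int.gcd x z : ℕ) : ℚ)
      = (((u * b + v) ^ 2 * (-(u * a) + v) : ℤ) : ℚ) /
        ((Int.gcd a v * Int.gcd b v * Int.gcd (u * b + v) (a + b) : ℕ) : ℚ) := by
  rw [hx, hy, hz]
  have hyx : -(u * a) + v ≤ u * b + v := by nlinarith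
  have hzy : v ≤ -(u * a) + v := by nlinarith
  have hzx : v ≤ u * b + v := le_trans hzy hyx
  rw [max_eq_left hyx, max_eq_left hzy, max_eq_left hzx]
  have hgxz : Int.gcd (u * b + v) v = Int.gcd b v := by
    have := igcd_add_mul_left (u * b) v 1
    rw [mul_one] at this
    rw [this, igcd_mul_cancel b hcuv]
  have hgyz : Int.gcd (-(u * a) + v) v = Int.gcd a v := by
    have := igcd_add_mul_left (-(u * a)) v 1
    rw [mul_one] at this
    rw [this, show -(u * a) = u * (-a) by ring, igcd_mul_cancel (-a) hcuv,
      Int.gcd, Int.natAbs_neg, Int.gcd]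
  have hgxu : Int.gcd (u * b + v) u = Int.gcd v u := by
    have := igcd_add_mul_left v u b
    rw [show v + u * b = u * b + v by ring] at this
    exact this
  have hux : Int.gcd u (u * b + v) = 1 := by
    rw [Int.gcd_comm, hgxu, Int.gcd_comm]; exact hcuv
  have hgxy : Int.gcd (u * b + v) (-(u * a) + v) = Int.gcd (u * b + v) (a + b) := by
    have h1 : -(u * a) + v = (u * b + v) * 1 + -(u * (a + b)) := by ring
    rw [h1, igcd_add_mul_right, show Int.gcd (u * b + v) (-(u * (a + b)))
        = Int.gcd (u * (a + b)) (u * b + v) by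
      simp [Int.gcd, Int.natAbs_neg, Nat.gcd_comm],
      igcd_mul_cancel (a + b) hux, Int.gcd_comm]
  congr 1
  · push_cast; ring
  · rw [hgxz, hgyz, hgxy]; push_cast; ring
end
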